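/- Interchange principle for (conjugate) Bailey pairs: suppose (α, β) is a Bailey pair relative to a, i.e. β_L = ∑_{i=0}^{L} α_i / ((q)_{L−i} (aq)_{L+i}) for all L ≥ 0, and (γ, δ) is a conjugate Bailey pair relative to a, i.e. γ_L = ∑_{r=L}^{∞} δ_r / ((q)_{r−L} (aq)_{r+L}) for all L ≥ 0. Then ∑_{L=0}^{∞} α_L γ_L = ∑_{L=0}^{∞} β_L δ_L, provided all series converge absolutely (e.g. as formal power series with suitable finiteness, or for |q| < 1 with appropriate decay of δ). -/
import Mathlib


/-!
STATEMENT 16: the interchange principle for (conjugate) Bailey pairs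
(Bailey's lemma in interchange-of-summation form), over `ℂ`.
`(q)_n = ∏_{k=1}^n (1-q^k)` and `(aq)_n = ∏_{k=1}^n (1-aq^k)`.
A Bailey pair satisfies `β_L = ∑_{i=0}^L α_i/((q)_{L-i}(aq)_{L+i})`;
a conjugate Bailey pair satisfies `γ_L = ∑_{r=L}^∞ δ_r/((q)_{r-L}(aq)_{r+L})`
(written below with `r = L + j`).  Under absolute convergence of the double
series, `∑_L α_L γ_L = ∑_L β_L δ_L`.
-/

noncomputable section

namespace Stmt16

/-- `(x; q)`-type product `∏_{k=1}^n (1 - x q^k)`. -/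
def P (x q : ℂ) (n : ℕ) : ℂ := ∏ k ∈ Finset.range n, (1 - x * q ^ (k + 1))

theorem bailey_interchange (q a : ℂ) (α β γ δ : ℕ → ℂ)
    (hβ : ∀ L, β L = ∑ i ∈ Finset.range (L + 1),
        α i / (P 1 q (L - i) * P a q (L + i)))
    (hγ : ∀ L, HasSum
        (fun j : ℕ => δ (L + j) / (P 1 q j * P a q (2 * L + j))) (γ L))
    (habs : Summable (fun p : ℕ × ℕ =>
        ‖α p.1 * (δ (p.1 + p.2) / (P 1 q p.2 * P a q (2 * p.1 + p.2)))‖)) :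
    ∑' L, α L * γ L = ∑' L, β L * δ L := by
  set f : ℕ × ℕ → ℂ := fun p =>
    α p.1 * (δ (p.1 + p.2) / (P 1 q p.2 * P a q (2 * p.1 + p.2))) with hfdef
  have hf : Summable f := Summable.of_norm habs
  set g : ℕ × ℕ → ℂ := fun p =>
    if p.2 ≤ p.1 then α p.2 * (δ p.1 / (P 1 q (p.1 - p.2) * P a q (p.1 + p.2))) else 0
    with hgdef
  have hinj : Function.Injective (fun p : ℕ × ℕ => (p.1 + p.2, p.1)) := by
    intro ⟨i, j⟩ ⟨i', j'⟩ h
    simp only [Prod.mk.injEq] at h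
    obtain ⟨h1, h2⟩ := h
    subst h2
    exact Prod.ext rfl (by omega)
  have hcomp : ∀ p : ℕ × ℕ, g (p.1 + p.2, p.1) = f p := by
    intro ⟨i, j⟩
    simp only [hgdef, hfdef]
    have h1 : i ≤ i + j := Nat.le_add_right i j
    rw [if_pos h1]
    have h2 : i + j - i = j := by omega
    have h3 : i + j + i = 2 * i + j := by omega
    rw [h2, h3]
  have hzero : ∀ x ∉ Set.range (fun p : ℕ × ℕ => (p.1 + p.2, p.1)), g x = 0 := by
    rintro ⟨L, i⟩ hx
    simp only [hgdef]
    rw [if_neg]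
    intro hiL
    exact hx ⟨(i, L - i), by simp [Prod.ext_iff]; omega⟩
  have hgsum : HasSum g (∑' p, f p) := by
    refine (Function.Injective.hasSum_iff hinj hzero).mp ?_
    have : (g ∘ fun p : ℕ × ℕ => (p.1 + p.2, p.1)) = f := funext hcomp
    rw [this]
    exact hf.hasSum
  -- LHS
  have hL : ∀ L, HasSum (fun j => f (L, j)) (α L * γ L) := fun L => (hγ L).mul_left (α L)
  have lhs_eq : ∑' L, α L * γ L = ∑' p, f p := by
    rw [Summable.tsum_prod' hf fun b => ((hL b).summable)]
    exact tsum_congr fun L => ((hL L).tsum_eq).symm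
  -- RHS
  have rhs_eq : ∑' L, β L * δ L = ∑' p, g p := by
    rw [Summable.tsum_prod' hgsum.summable fun b => hgsum.summable.prod_factor b]
    refine tsum_congr fun L => ?_
    have hfin : ∀ i ∉ Finset.range (L + 1), g (L, i) = 0 := by
      intro i hi
      simp only [Finset.mem_range] at hi
      simp only [hgdef]
      rw [if_neg]; omega
    rw [tsum_eq_sum hfin, hβ L, Finset.sum_mul]
    refine Finset.sum_congr rfl fun i hi => ?_
    simp only [Finset.mem_range] at hi
    simp only [hgdef]
    rw [if_pos (by omega : i ≤ L)]
    ring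
  rw [lhs_eq, rhs_eq, hgsum.tsum_eq]

end Stmt16
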